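/- In the two-patch edge setting, there exists a linear operator P_e : V_pw → V_pw such that for every corner-continuous φ ∈ V_pw: (1) P_eφ is edge-continuous; (2) P_eφ = φ if and only if φ is edge-continuous; and (3) P_e preserves patchwise polynomial moments of order r, i.e. for each σ ∈ {−,+} and all q₁, q₂ ∈ Q one has ∫_{[0,1]²} (P_eφ)^σ(x,s) q₁(x) q₂(s) dx ds = ∫_{[0,1]²} φ^σ(x,s) q₁(x) q₂(s) dx ds. -/

import Mathlib

noncomputable section

/-- The `L²(0,1)` pairing `⟨f, g⟩ = ∫₀¹ f g`. -/
def l2ip (f g : ℝ → ℝ) : ℝ := ∫ x in (0:ℝ)..1, f x * g x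

/-- Real polynomial functions of degree at most `r - 1`. -/
def polyDegLT (r : ℕ) : Set (ℝ → ℝ) :=
  {f | ∃ p : Polynomial ℝ, p.degree < (r : WithBot ℕ) ∧ f = fun x => p.eval x}

/-- Tensor-product span of the functions `(x, s) ↦ λᵢ(x) λⱼ(s)`. -/
def tensorSpan {n : ℕ} (lam : Fin (n + 1) → ℝ → ℝ) : Submodule ℝ (ℝ → ℝ → ℝ) :=
  Submodule.span ℝ {f | ∃ i j, f = fun x s => lam i x * lam j s}

/-- Edge continuity: the two patch components agree on the shared edge `s = 0`. -/
def EdgeCont (φ : (ℝ → ℝ → ℝ) × (ℝ → ℝ → ℝ)) : Prop :=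
  ∀ x ∈ Set.Icc (0:ℝ) 1, φ.1 x 0 = φ.2 x 0

/-- Corner continuity: the two patch components agree at the two endpoints of the edge. -/
def CornerCont (φ : (ℝ → ℝ → ℝ) × (ℝ → ℝ → ℝ)) : Prop :=
  φ.1 0 0 = φ.2 0 0 ∧ φ.1 1 0 = φ.2 1 0

/-- The moment `∫_{[0,1]²} f(x,s) q₁(x) q₂(s) dx ds`. -/
def mom2 (f : ℝ → ℝ → ℝ) (q₁ q₂ : ℝ → ℝ) : ℝ :=
  ∫ x in (0:ℝ)..1, ∫ s in (0:ℝ)..1, f x s * q₁ x * q₂ s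

section AuxLemmas

open MeasureTheory intervalIntegral

variable {n : ℕ}

lemma continuousOn_of_mem_span (lam : Fin (n + 1) → ℝ → ℝ)
    (hc : ∀ i, ContinuousOn (lam i) (Set.Icc (0:ℝ) 1)) {u : ℝ → ℝ}
    (hu : u ∈ Submodule.span ℝ (Set.range lam)) :
    ContinuousOn u (Set.Icc (0:ℝ) 1) := by
  induction hu using Submodule.span_induction with
  | mem x hx => obtain ⟨i, rfl⟩ := hx; exact hc i
  | zero => exact continuousOn_const
  | add x y hx hy ihx ihy => exact ihx.add ihy
  | smul a x hx ihx => exact ihx.const_smul a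

lemma trace_mem_span (lam : Fin (n + 1) → ℝ → ℝ) {f : ℝ → ℝ → ℝ}
    (hf : f ∈ tensorSpan lam) :
    (fun x => f x 0) ∈ Submodule.span ℝ (Set.range lam) := by
  induction hf using Submodule.span_induction with
  | mem g hg =>
      obtain ⟨i, j, rfl⟩ := hg
      have h : (fun x => lam i x * lam j 0) = (lam j 0) • lam i := by
        funext x; simp [mul_comm]
      rw [h]
      exact Submodule.smul_mem _ _ (Submodule.subset_span ⟨i, rfl⟩)
  | zero => exact Submodule.zero_mem _
  | add x y hx hy ihx ihy =>
      have h : (fun t => (x + y) t 0) = (fun t => x t 0) + fun t => y t 0 := rfl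
      rw [h]; exact Submodule.add_mem _ ihx ihy
  | smul a x hx ihx =>
      have h : (fun t => (a • x) t 0) = a • fun t => x t 0 := rfl
      rw [h]; exact Submodule.smul_mem _ _ ihx

lemma prod_mem_tensorSpan (lam : Fin (n + 1) → ℝ → ℝ) {u v : ℝ → ℝ}
    (hu : u ∈ Submodule.span ℝ (Set.range lam))
    (hv : v ∈ Submodule.span ℝ (Set.range lam)) :
    (fun x s => u x * v s) ∈ tensorSpan lam := by
  induction hu using Submodule.span_induction with
  | mem g hg =>
      obtain ⟨i, rfl⟩ := hg
      induction hv using Submodule.span_induction with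
      | mem h hh =>
          obtain ⟨j, rfl⟩ := hh
          exact Submodule.subset_span ⟨i, j, rfl⟩
      | zero =>
          have h : (fun x s => lam i x * (0:ℝ→ℝ) s) = (0:ℝ→ℝ→ℝ) := by
            funext x s; simp
          rw [h]; exact Submodule.zero_mem _
      | add a b ha hb iha ihb =>
          have h : (fun x s => lam i x * (a + b) s)
              = (fun x s => lam i x * a s) + fun x s => lam i x * b s := by
            funext x s; simp [mul_add]
          rw [h]; exact Submodule.add_mem _ iha ihb
      | smul c a ha iha =>
          have h : (fun x s => lam i x * (c • a) s) = c • fun x s => lam i x * a s := by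
            funext x s; simp only [Pi.smul_apply, smul_eq_mul]; ring
          rw [h]; exact Submodule.smul_mem _ _ iha
  | zero =>
      have h : (fun x s => (0:ℝ→ℝ) x * v s) = (0:ℝ→ℝ→ℝ) := by funext x s; simp
      rw [h]; exact Submodule.zero_mem _
  | add a b ha hb iha ihb =>
      have h : (fun x s => (a + b) x * v s)
          = (fun x s => a x * v s) + fun x s => b x * v s := by
        funext x s; simp [add_mul]
      rw [h]; exact Submodule.add_mem _ iha ihb
  | smul c a ha iha =>
      have h : (fun x s => (c • a) x * v s) = c • fun x s => a x * v s := by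
        funext x s; simp only [Pi.smul_apply, smul_eq_mul]; ring
      rw [h]; exact Submodule.smul_mem _ _ iha

/-- integrability data for the double moment integral. -/
def Good2 (q₁ q₂ : ℝ → ℝ) (f : ℝ → ℝ → ℝ) : Prop :=
  (∀ x : ℝ, IntervalIntegrable (fun s => f x s * q₁ x * q₂ s) MeasureTheory.volume 0 1) ∧
  IntervalIntegrable (fun x => ∫ s in (0:ℝ)..1, f x s * q₁ x * q₂ s) MeasureTheory.volume 0 1

lemma intInt_of_continuousOn {g : ℝ → ℝ} (hg : ContinuousOn g (Set.Icc (0:ℝ) 1)) :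
    IntervalIntegrable g MeasureTheory.volume 0 1 := by
  apply ContinuousOn.intervalIntegrable
  rwa [Set.uIcc_of_le (by norm_num : (0:ℝ) ≤ 1)]

lemma good2_of_mem (lam : Fin (n + 1) → ℝ → ℝ)
    (hc : ∀ i, ContinuousOn (lam i) (Set.Icc (0:ℝ) 1))
    {q₁ q₂ : ℝ → ℝ} (hq₁ : Continuous q₁) (hq₂ : Continuous q₂)
    {f : ℝ → ℝ → ℝ} (hf : f ∈ tensorSpan lam) : Good2 q₁ q₂ f := by
  induction hf using Submodule.span_induction with
  | mem g hg =>
      obtain ⟨i, j, rfl⟩ := hg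
      have hinner : ∀ x : ℝ, (fun s => lam i x * lam j s * q₁ x * q₂ s)
          = fun s => (lam i x * q₁ x) * (lam j s * q₂ s) := by
        intro x; funext s; ring
      constructor
      · intro x
        rw [hinner x]
        exact (intInt_of_continuousOn ((hc j).mul hq₂.continuousOn)).const_mul _
      · have h : (fun x => ∫ s in (0:ℝ)..1, lam i x * lam j s * q₁ x * q₂ s)
            = fun x => (lam i x * q₁ x) * ∫ s in (0:ℝ)..1, lam j s * q₂ s := by
          funext x
          rw [hinner x, intervalIntegral.integral_const_mul]
        rw [h]
        exact intInt_of_continuousOn (((hc i).mul hq₁.continuousOn).mul continuousOn_const)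
  | zero =>
      constructor
      · intro x; simpa using intervalIntegrable_const (c := (0:ℝ))
      · simpa using intervalIntegrable_const (c := (0:ℝ))
  | add a b ha hb iha ihb =>
      have hinner : ∀ x : ℝ, (fun s => (a + b) x s * q₁ x * q₂ s)
          = fun s => a x s * q₁ x * q₂ s + b x s * q₁ x * q₂ s := by
        intro x; funext s; simp [add_mul]
      constructor
      · intro x; rw [hinner x]; exact (iha.1 x).add (ihb.1 x)
      · have h : (fun x => ∫ s in (0:ℝ)..1, (a + b) x s * q₁ x * q₂ s)
            = fun x => (∫ s in (0:ℝ)..1, a x s * q₁ x * q₂ s)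
                + ∫ s in (0:ℝ)..1, b x s * q₁ x * q₂ s := by
          funext x
          rw [hinner x]
          exact intervalIntegral.integral_add (iha.1 x) (ihb.1 x)
        rw [h]; exact iha.2.add ihb.2
  | smul c a ha iha =>
      have hinner : ∀ x : ℝ, (fun s => (c • a) x s * q₁ x * q₂ s)
          = fun s => c * (a x s * q₁ x * q₂ s) := by
        intro x; funext s; simp only [Pi.smul_apply, smul_eq_mul]; ring
      constructor
      · intro x; rw [hinner x]; exact (iha.1 x).const_mul c
      · have h : (fun x => ∫ s in (0:ℝ)..1, (c • a) x s * q₁ x * q₂ s)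
            = fun x => c * ∫ s in (0:ℝ)..1, a x s * q₁ x * q₂ s := by
          funext x; rw [hinner x, intervalIntegral.integral_const_mul]
        rw [h]; exact iha.2.const_mul c

lemma mom2_add {q₁ q₂ : ℝ → ℝ} {f g : ℝ → ℝ → ℝ}
    (hf : Good2 q₁ q₂ f) (hg : Good2 q₁ q₂ g) :
    mom2 (f + g) q₁ q₂ = mom2 f q₁ q₂ + mom2 g q₁ q₂ := by
  unfold mom2
  have h : (fun x => ∫ s in (0:ℝ)..1, (f + g) x s * q₁ x * q₂ s)
      = fun x => (∫ s in (0:ℝ)..1, f x s * q₁ x * q₂ s)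
          + ∫ s in (0:ℝ)..1, g x s * q₁ x * q₂ s := by
    funext x
    have h2 : (fun s => (f + g) x s * q₁ x * q₂ s)
        = fun s => f x s * q₁ x * q₂ s + g x s * q₁ x * q₂ s := by
      funext s; simp [add_mul]
    rw [h2]
    exact intervalIntegral.integral_add (hf.1 x) (hg.1 x)
  rw [h]
  exact intervalIntegral.integral_add hf.2 hg.2

lemma mom2_smul (c : ℝ) (f : ℝ → ℝ → ℝ) (q₁ q₂ : ℝ → ℝ) :
    mom2 (c • f) q₁ q₂ = c * mom2 f q₁ q₂ := by
  unfold mom2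
  have h : (fun x => ∫ s in (0:ℝ)..1, (c • f) x s * q₁ x * q₂ s)
      = fun x => c * ∫ s in (0:ℝ)..1, f x s * q₁ x * q₂ s := by
    funext x
    rw [show (fun s => (c • f) x s * q₁ x * q₂ s) = fun s => c * (f x s * q₁ x * q₂ s)
      from funext fun s => by simp only [Pi.smul_apply, smul_eq_mul]; ring,
      intervalIntegral.integral_const_mul]
  rw [h, intervalIntegral.integral_const_mul]

lemma mom2_prod (u v q₁ q₂ : ℝ → ℝ) :
    mom2 (fun x s => u x * v s) q₁ q₂
      = (∫ x in (0:ℝ)..1, u x * q₁ x) * ∫ s in (0:ℝ)..1, v s * q₂ s := by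
  unfold mom2
  have h : (fun x => ∫ s in (0:ℝ)..1, u x * v s * q₁ x * q₂ s)
      = fun x => (u x * q₁ x) * ∫ s in (0:ℝ)..1, v s * q₂ s := by
    funext x
    rw [show (fun s => u x * v s * q₁ x * q₂ s) = fun s => (u x * q₁ x) * (v s * q₂ s)
      from funext fun s => by ring, intervalIntegral.integral_const_mul]
  rw [h, intervalIntegral.integral_mul_const]

end AuxLemmas

set_option maxHeartbeats 1000000 in
set_option synthInstance.maxHeartbeats 1000000 in
/-- Proposition 3.2 of the paper, two-patch edge setting: there exists a
local edge-conforming operator `P_e` on the broken space `V_pw` such that for every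
corner-continuous `φ`: `P_e φ` is edge-continuous, `P_e φ = φ` iff `φ` is edge-continuous,
and `P_e` preserves the patchwise polynomial moments of order `r`. -/
theorem stmt6
    -- the two univariate spline spaces 𝕍₋ ⊆ 𝕍₊ with interpolatory bases
    (nm np : ℕ)
    (lamm : Fin (nm + 1) → ℝ → ℝ) (lamp : Fin (np + 1) → ℝ → ℝ)
    (hc_m : ∀ i, ContinuousOn (lamm i) (Set.Icc (0:ℝ) 1))
    (hc_p : ∀ i, ContinuousOn (lamp i) (Set.Icc (0:ℝ) 1))
    (hli_m : LinearIndependent ℝ lamm) (hli_p : LinearIndependent ℝ lamp)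
    (h0_m : ∀ i, lamm i 0 = if i = 0 then 1 else 0)
    (h1_m : ∀ i, lamm i 1 = if i = Fin.last nm then 1 else 0)
    (h0_p : ∀ i, lamp i 0 = if i = 0 then 1 else 0)
    (h1_p : ∀ i, lamp i 1 = if i = Fin.last np then 1 else 0)
    (hnested : Submodule.span ℝ (Set.range lamm) ≤ Submodule.span ℝ (Set.range lamp))
    -- the order r of moment preservation; Q ⊆ 𝕍₋
    (r : ℕ)
    (hQ : polyDegLT r ⊆ (Submodule.span ℝ (Set.range lamm) : Set (ℝ → ℝ)))
    -- (a) a moment-preserving restriction operator R : 𝕍₊ → 𝕍₋ preserving endpoint values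
    (R : ↥(Submodule.span ℝ (Set.range lamp)) →ₗ[ℝ] ↥(Submodule.span ℝ (Set.range lamm)))
    (hRid : ∀ v : ↥(Submodule.span ℝ (Set.range lamp)),
      (v : ℝ → ℝ) ∈ Submodule.span ℝ (Set.range lamm) → ((R v : ℝ → ℝ)) = (v : ℝ → ℝ))
    (hR0 : ∀ v, ((R v : ℝ → ℝ)) 0 = (v : ℝ → ℝ) 0)
    (hR1 : ∀ v, ((R v : ℝ → ℝ)) 1 = (v : ℝ → ℝ) 1)
    (hRmom : ∀ v, ∀ q ∈ polyDegLT r, l2ip (R v : ℝ → ℝ) q = l2ip (v : ℝ → ℝ) q)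
    -- (b) interior splines μ^σ_e matching the moments of the endpoint basis functions
    (hmu_m : ∀ e : Fin (nm + 1), e = 0 ∨ e = Fin.last nm →
      ∃ μ ∈ Submodule.span ℝ (Set.range lamm), μ 0 = 0 ∧ μ 1 = 0 ∧
        ∀ q ∈ polyDegLT r, l2ip μ q = l2ip (lamm e) q)
    (hmu_p : ∀ e : Fin (np + 1), e = 0 ∨ e = Fin.last np →
      ∃ μ ∈ Submodule.span ℝ (Set.range lamp), μ 0 = 0 ∧ μ 1 = 0 ∧
        ∀ q ∈ polyDegLT r, l2ip μ q = l2ip (lamp e) q) :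
    -- conclusion: the local edge-conforming projection P_e on the broken space V_pw
    ∃ P : ↥((tensorSpan lamm).prod (tensorSpan lamp)) →ₗ[ℝ]
          ↥((tensorSpan lamm).prod (tensorSpan lamp)),
      ∀ φ : ↥((tensorSpan lamm).prod (tensorSpan lamp)), CornerCont ((φ : (ℝ → ℝ → ℝ) × (ℝ → ℝ → ℝ))) →
        (EdgeCont ((P φ : (ℝ → ℝ → ℝ) × (ℝ → ℝ → ℝ)))) ∧
        (P φ = φ ↔ EdgeCont ((φ : (ℝ → ℝ → ℝ) × (ℝ → ℝ → ℝ)))) ∧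
        (∀ q₁ ∈ polyDegLT r, ∀ q₂ ∈ polyDegLT r,
          mom2 ((P φ : (ℝ → ℝ → ℝ) × (ℝ → ℝ → ℝ)).1) q₁ q₂ =
            mom2 ((φ : (ℝ → ℝ → ℝ) × (ℝ → ℝ → ℝ)).1) q₁ q₂ ∧
          mom2 ((P φ : (ℝ → ℝ → ℝ) × (ℝ → ℝ → ℝ)).2) q₁ q₂ =
            mom2 ((φ : (ℝ → ℝ → ℝ) × (ℝ → ℝ → ℝ)).2) q₁ q₂) := by
  classical
  obtain ⟨μ, hμmem, hμ0, hμ1, hμmom⟩ := hmu_p 0 (Or.inl rfl)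
  set V : Submodule ℝ ((ℝ→ℝ→ℝ) × (ℝ→ℝ→ℝ)) := (tensorSpan lamm).prod (tensorSpan lamp) with hVdef
  have hqcont : ∀ q ∈ polyDegLT r, Continuous q := by
    rintro q ⟨p, -, rfl⟩; exact p.continuous
  -- the edge-continuous subspace E
  let E : Submodule ℝ ↥V :=
  { carrier := {x | EdgeCont (x : (ℝ→ℝ→ℝ) × (ℝ→ℝ→ℝ))}
    zero_mem' := by intro x hx; simp
    add_mem' := by
      intro a b ha hb x hx
      have h1 := ha x hx
      have h2 := hb x hx
      show ((a : (ℝ→ℝ→ℝ) × (ℝ→ℝ→ℝ)) + b).1 x 0 = ((a : (ℝ→ℝ→ℝ) × (ℝ→ℝ→ℝ)) + b).2 x 0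
      simp only [Prod.fst_add, Prod.snd_add, Pi.add_apply]
      rw [h1, h2]
    smul_mem' := by
      intro c a ha x hx
      have h1 := ha x hx
      show (c • (a : (ℝ→ℝ→ℝ) × (ℝ→ℝ→ℝ))).1 x 0 = (c • (a : (ℝ→ℝ→ℝ) × (ℝ→ℝ→ℝ))).2 x 0
      simp only [Prod.smul_fst, Prod.smul_snd, Pi.smul_apply, smul_eq_mul]
      rw [h1] }
  -- the zero-moment subspace K
  let K : Submodule ℝ ↥V :=
  { carrier := {x | ∀ q₁ ∈ polyDegLT r, ∀ q₂ ∈ polyDegLT r,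
        mom2 (x : (ℝ→ℝ→ℝ) × (ℝ→ℝ→ℝ)).1 q₁ q₂ = 0 ∧
        mom2 (x : (ℝ→ℝ→ℝ) × (ℝ→ℝ→ℝ)).2 q₁ q₂ = 0}
    zero_mem' := by
      intro q₁ hq₁ q₂ hq₂
      constructor <;> simp [mom2]
    add_mem' := by
      intro a b ha hb q₁ hq₁ q₂ hq₂
      have hq₁c := hqcont q₁ hq₁
      have hq₂c := hqcont q₂ hq₂
      obtain ⟨ha1, ha2⟩ := ha q₁ hq₁ q₂ hq₂
      obtain ⟨hb1, hb2⟩ := hb q₁ hq₁ q₂ hq₂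
      have hma := (Submodule.mem_prod.mp a.2)
      have hmb := (Submodule.mem_prod.mp b.2)
      constructor
      · show mom2 ((a : (ℝ→ℝ→ℝ) × (ℝ→ℝ→ℝ)).1 + (b : (ℝ→ℝ→ℝ) × (ℝ→ℝ→ℝ)).1) q₁ q₂ = 0
        rw [mom2_add (good2_of_mem lamm hc_m hq₁c hq₂c hma.1)
          (good2_of_mem lamm hc_m hq₁c hq₂c hmb.1), ha1, hb1, add_zero]
      · show mom2 ((a : (ℝ→ℝ→ℝ) × (ℝ→ℝ→ℝ)).2 + (b : (ℝ→ℝ→ℝ) × (ℝ→ℝ→ℝ)).2) q₁ q₂ = 0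
        rw [mom2_add (good2_of_mem lamp hc_p hq₁c hq₂c hma.2)
          (good2_of_mem lamp hc_p hq₁c hq₂c hmb.2), ha2, hb2, add_zero]
    smul_mem' := by
      intro c a ha q₁ hq₁ q₂ hq₂
      obtain ⟨ha1, ha2⟩ := ha q₁ hq₁ q₂ hq₂
      constructor
      · show mom2 (c • (a : (ℝ→ℝ→ℝ) × (ℝ→ℝ→ℝ)).1) q₁ q₂ = 0
        rw [mom2_smul, ha1, mul_zero]
      · show mom2 (c • (a : (ℝ→ℝ→ℝ) × (ℝ→ℝ→ℝ)).2) q₁ q₂ = 0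
        rw [mom2_smul, ha2, mul_zero] }
  have hEmem : ∀ x : ↥V, x ∈ E ↔ EdgeCont (x : (ℝ→ℝ→ℝ) × (ℝ→ℝ→ℝ)) := fun _ => Iff.rfl
  have hKmem : ∀ x : ↥V, x ∈ K ↔ (∀ q₁ ∈ polyDegLT r, ∀ q₂ ∈ polyDegLT r,
      mom2 (x : (ℝ→ℝ→ℝ) × (ℝ→ℝ→ℝ)).1 q₁ q₂ = 0 ∧
      mom2 (x : (ℝ→ℝ→ℝ) × (ℝ→ℝ→ℝ)).2 q₁ q₂ = 0) := fun _ => Iff.rfl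
  clear_value E K
  have hcontμ : ContinuousOn μ (Set.Icc (0:ℝ) 1) := continuousOn_of_mem_span lamp hc_p hμmem
  have hvmom : ∀ q ∈ polyDegLT r, (∫ s in (0:ℝ)..1, (lamp 0 s - μ s) * q s) = 0 := by
    intro q hq
    have hqc := hqcont q hq
    have h1 : IntervalIntegrable (fun s => lamp 0 s * q s) MeasureTheory.volume 0 1 :=
      intInt_of_continuousOn ((hc_p 0).mul hqc.continuousOn)
    have h2 : IntervalIntegrable (fun s => μ s * q s) MeasureTheory.volume 0 1 :=
      intInt_of_continuousOn (hcontμ.mul hqc.continuousOn)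
    have h3 : (fun s => (lamp 0 s - μ s) * q s) = fun s => lamp 0 s * q s - μ s * q s := by
      funext s; ring
    rw [h3, intervalIntegral.integral_sub h1 h2]
    have hm := hμmom q hq
    unfold l2ip at hm
    rw [hm, sub_self]
  -- key decomposition: V = E + K
  have key : ∀ x : ↥V, ∃ e ∈ E, ∃ k ∈ K, e + k = x := by
    rintro ⟨⟨f, g⟩, hfg⟩
    obtain ⟨hf, hg⟩ := Submodule.mem_prod.mp hfg
    have htf : (fun x => f x 0) ∈ Submodule.span ℝ (Set.range lamm) := trace_mem_span lamm hf
    have htg : (fun x => g x 0) ∈ Submodule.span ℝ (Set.range lamp) := trace_mem_span lamp hg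
    have hcmem : (fun x => f x 0 - g x 0) ∈ Submodule.span ℝ (Set.range lamp) :=
      Submodule.sub_mem _ (hnested htf) htg
    have hcmem' : (fun x => g x 0 - f x 0) ∈ Submodule.span ℝ (Set.range lamp) :=
      Submodule.sub_mem _ htg (hnested htf)
    have hvmem : (fun s => lamp 0 s - μ s) ∈ Submodule.span ℝ (Set.range lamp) :=
      Submodule.sub_mem _ (Submodule.subset_span ⟨0, rfl⟩) hμmem
    have hw : (fun x s => (f x 0 - g x 0) * (lamp 0 s - μ s)) ∈ tensorSpan lamp :=
      prod_mem_tensorSpan lamp hcmem hvmem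
    have hw' : (fun x s => (g x 0 - f x 0) * (lamp 0 s - μ s)) ∈ tensorSpan lamp :=
      prod_mem_tensorSpan lamp hcmem' hvmem
    refine ⟨⟨(f, fun x s => g x s + (f x 0 - g x 0) * (lamp 0 s - μ s)), ?_⟩, ?_,
           ⟨((0:ℝ→ℝ→ℝ), fun x s => (g x 0 - f x 0) * (lamp 0 s - μ s)), ?_⟩, ?_, ?_⟩
    · refine Submodule.mem_prod.mpr ⟨hf, ?_⟩
      have h : (fun x s => g x s + (f x 0 - g x 0) * (lamp 0 s - μ s))
          = g + fun x s => (f x 0 - g x 0) * (lamp 0 s - μ s) := rfl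
      rw [h]; exact Submodule.add_mem _ hg hw
    · refine (hEmem _).mpr ?_
      intro x hx
      show f x 0 = g x 0 + (f x 0 - g x 0) * (lamp 0 0 - μ 0)
      have h0 : lamp 0 (0:ℝ) = 1 := by simpa using h0_p 0
      rw [h0, hμ0]; ring
    · exact Submodule.mem_prod.mpr ⟨Submodule.zero_mem _, hw'⟩
    · refine (hKmem _).mpr ?_
      intro q₁ hq₁ q₂ hq₂
      constructor
      · show mom2 (0:ℝ→ℝ→ℝ) q₁ q₂ = 0
        simp [mom2]
      · show mom2 (fun x s => (g x 0 - f x 0) * (lamp 0 s - μ s)) q₁ q₂ = 0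
        rw [mom2_prod, hvmom q₂ hq₂, mul_zero]
    · apply Subtype.ext
      show ((f, fun x s => g x s + (f x 0 - g x 0) * (lamp 0 s - μ s))
          : (ℝ→ℝ→ℝ) × (ℝ→ℝ→ℝ))
          + ((0:ℝ→ℝ→ℝ), fun x s => (g x 0 - f x 0) * (lamp 0 s - μ s)) = (f, g)
      refine Prod.ext ?_ ?_
      · show f + 0 = f
        exact add_zero f
      · show (fun x s => g x s + (f x 0 - g x 0) * (lamp 0 s - μ s))
            + (fun x s => (g x 0 - f x 0) * (lamp 0 s - μ s)) = g
        funext x s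
        show (g x s + (f x 0 - g x 0) * (lamp 0 s - μ s))
            + (g x 0 - f x 0) * (lamp 0 s - μ s) = g x s
        ring
  -- complement of E inside K
  let p : Submodule ℝ ↥K := E.comap K.subtype
  obtain ⟨q, hqc⟩ := @Submodule.exists_isCompl ℝ ↥K _ _ _ p
  let W : Submodule ℝ ↥V := q.map K.subtype
  have hWK : W ≤ K := by
    rintro x ⟨y, -, rfl⟩; exact y.2
  have hcompl : IsCompl E W := by
    constructor
    · rw [disjoint_iff_inf_le]
      rintro x ⟨hxE, y, hyq, rfl⟩
      have hyp : y ∈ p := hxE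
      have hy : y ∈ p ⊓ q := ⟨hyp, hyq⟩
      rw [hqc.inf_eq_bot] at hy
      rw [Submodule.mem_bot] at hy
      simp [hy]
    · rw [codisjoint_iff, eq_top_iff]
      intro x _
      obtain ⟨e, he, k, hk, hek⟩ := key x
      have hmem : (⟨k, hk⟩ : ↥K) ∈ p ⊔ q := by
        rw [hqc.sup_eq_top]; trivial
      obtain ⟨a, haP, b, hbq, hab⟩ := Submodule.mem_sup.mp hmem
      refine Submodule.mem_sup.mpr ⟨e + ↑a, Submodule.add_mem _ he haP, ↑b,
        ⟨b, hbq, rfl⟩, ?_⟩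
      have hab' : (↑a : ↥V) + ↑b = k := by
        have h := congrArg (fun z : ↥K => (z : ↥V)) hab
        simpa using h
      rw [add_assoc, hab', hek]
  let proj := Submodule.projectionOnto E W hcompl
  let P : ↥V →ₗ[ℝ] ↥V := E.subtype.comp proj
  have hPmem : ∀ x : ↥V, P x ∈ E := fun x => (proj x).2
  have hPid : ∀ x : ↥V, x ∈ E → P x = x := by
    intro x hx
    exact congrArg (E.subtype) (Submodule.linearProjOfIsCompl_apply_left hcompl ⟨x, hx⟩)
  have hdiffK : ∀ x : ↥V, x - P x ∈ K := by
    intro x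
    apply hWK
    have hker : x - P x ∈ LinearMap.ker proj := by
      rw [LinearMap.mem_ker, map_sub]
      have h : proj (P x) = proj x :=
        Submodule.linearProjOfIsCompl_apply_left hcompl (proj x)
      rw [h, sub_self]
    rwa [Submodule.linearProjOfIsCompl_ker hcompl] at hker
  refine ⟨P, ?_⟩
  intro φ hφ
  refine ⟨(hEmem _).mp (hPmem φ), ⟨?_, fun h => hPid φ ((hEmem _).mpr h)⟩, ?_⟩
  · intro h
    have hh := hPmem φ
    rw [h] at hh
    exact (hEmem _).mp hh
  · intro q₁ hq₁ q₂ hq₂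
    have hq₁c := hqcont q₁ hq₁
    have hq₂c := hqcont q₂ hq₂
    obtain ⟨hk1, hk2⟩ := (hKmem _).mp (hdiffK φ) q₁ hq₁ q₂ hq₂
    have hmP := Submodule.mem_prod.mp (P φ).2
    have hmD := Submodule.mem_prod.mp (φ - P φ).2
    have h1 : ((φ : (ℝ→ℝ→ℝ) × (ℝ→ℝ→ℝ))).1
        = ((P φ : (ℝ→ℝ→ℝ) × (ℝ→ℝ→ℝ))).1 + ((φ - P φ : ↥V) : (ℝ→ℝ→ℝ) × (ℝ→ℝ→ℝ)).1 := by
      simp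
    have h2 : ((φ : (ℝ→ℝ→ℝ) × (ℝ→ℝ→ℝ))).2
        = ((P φ : (ℝ→ℝ→ℝ) × (ℝ→ℝ→ℝ))).2 + ((φ - P φ : ↥V) : (ℝ→ℝ→ℝ) × (ℝ→ℝ→ℝ)).2 := by
      simp
    constructor
    · rw [h1, mom2_add (good2_of_mem lamm hc_m hq₁c hq₂c hmP.1)
        (good2_of_mem lamm hc_m hq₁c hq₂c hmD.1), hk1, add_zero]
    · rw [h2, mom2_add (good2_of_mem lamp hc_p hq₁c hq₂c hmP.2)
        (good2_of_mem lamp hc_p hq₁c hq₂c hmD.2), hk2, add_zero]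


end
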